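/- For the Laurent polynomial W(y1, y2) = y1 + y2 + y1 y2 + 1/y1 + 1/y2 + 1/(y1 y2) over \mathbb{C} (the potential of the monotone torus in Bl^3 \P^2), the set of critical values is {6, -2, -3}; equivalently, in the Jacobian ring \mathbb{Q}[y1^{\pm},y2^{\pm}]/(y1 \partial_{y1} W, y2 \partial_{y2} W), the element W satisfies (W - 6)(W + 2)(W + 3) = 0 and this cubic is its minimal polynomial. -/

import Mathlib

open MvPolynomial

/-- The potential `w = y₁ + y₂ + y₁y₂ + Y₁ + Y₂ + Y₁Y₂` of the monotone torus in
`Bl³ℙ²`, with `X 0 = y₁`, `X 1 = y₂`, `X 2 = Y₁`, `X 3 = Y₂`. -/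
noncomputable def wBl3 : MvPolynomial (Fin 4) ℚ :=
  X 0 + X 1 + X 0 * X 1 + X 2 + X 3 + X 2 * X 3

/-- The logarithmic critical point equation `D1 = y₁ ∂_{y₁} w - Y₁ ∂_{Y₁} w`. -/
noncomputable def D1Bl3 : MvPolynomial (Fin 4) ℚ :=
  X 0 * pderiv (0 : Fin 4) wBl3 - X 2 * pderiv (2 : Fin 4) wBl3

/-- The logarithmic critical point equation `D2 = y₂ ∂_{y₂} w - Y₂ ∂_{Y₂} w`. -/
noncomputable def D2Bl3 : MvPolynomial (Fin 4) ℚ :=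
  X 1 * pderiv (1 : Fin 4) wBl3 - X 3 * pderiv (3 : Fin 4) wBl3

/-- The Jacobian ideal of the potential of `Bl³ℙ²`. -/
noncomputable def jacIdealBl3 : Ideal (MvPolynomial (Fin 4) ℚ) :=
  Ideal.span {X 0 * X 2 - 1, X 1 * X 3 - 1, D1Bl3, D2Bl3}

set_option linter.unnecessarySeqFocus false

lemma deriv1 (y1 y2 : ℂ) (h1 : y1 ≠ 0) :
    deriv (fun t : ℂ => t + y2 + t * y2 + t⁻¹ + y2⁻¹ + (t * y2)⁻¹) y1
      = 1 + y2 - (y1 ^ 2)⁻¹ - (y1 ^ 2)⁻¹ * y2⁻¹ := by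
  have hfun : (fun t : ℂ => t + y2 + t * y2 + t⁻¹ + y2⁻¹ + (t * y2)⁻¹)
      = fun t : ℂ => t + y2 + t * y2 + t⁻¹ + y2⁻¹ + t⁻¹ * y2⁻¹ := by
    funext t; rw [mul_inv]
  rw [hfun]
  have h0 := hasDerivAt_id y1
  have hi := hasDerivAt_inv h1
  have H := ((((h0.add_const y2).add (h0.mul_const y2)).add hi).add_const y2⁻¹).add
    (hi.mul_const y2⁻¹)
  simp only [id_eq] at H
  refine H.deriv.trans ?_; ring

lemma deriv2 (y1 y2 : ℂ) (h2 : y2 ≠ 0) :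
    deriv (fun t : ℂ => y1 + t + y1 * t + y1⁻¹ + t⁻¹ + (y1 * t)⁻¹) y2
      = 1 + y1 - (y2 ^ 2)⁻¹ - y1⁻¹ * (y2 ^ 2)⁻¹ := by
  have hfun : (fun t : ℂ => y1 + t + y1 * t + y1⁻¹ + t⁻¹ + (y1 * t)⁻¹)
      = fun t : ℂ => y1 + t + y1 * t + y1⁻¹ + t⁻¹ + y1⁻¹ * t⁻¹ := by
    funext t; rw [mul_inv]
  rw [hfun]
  have h0 := hasDerivAt_id y2
  have hi := hasDerivAt_inv h2
  have H := ((((h0.const_add y1).add (h0.const_mul y1)).add_const y1⁻¹).add hi).add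
    (hi.const_mul y1⁻¹)
  simp only [id_eq] at H
  refine H.deriv.trans ?_; ring

noncomputable def om : ℂ := ⟨-1/2, Real.sqrt 3 / 2⟩

lemma om_rel : om ^ 2 + om + 1 = 0 := by
  have hs : Real.sqrt 3 * Real.sqrt 3 = 3 := Real.mul_self_sqrt (by norm_num)
  apply Complex.ext <;>
    simp [om, pow_two, Complex.add_re, Complex.mul_re, Complex.mul_im, Complex.add_im, hs] <;>
    ring_nf <;> norm_num [hs]

lemma om_ne : om ≠ 0 := by
  intro h
  have := om_rel
  rw [h] at this
  norm_num at this

lemma part1 :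
    {c : ℂ | ∃ y1 y2 : ℂ, y1 ≠ 0 ∧ y2 ≠ 0 ∧
        y1 * deriv (fun t : ℂ => t + y2 + t * y2 + t⁻¹ + y2⁻¹ + (t * y2)⁻¹) y1 = 0 ∧
        y2 * deriv (fun t : ℂ => y1 + t + y1 * t + y1⁻¹ + t⁻¹ + (y1 * t)⁻¹) y2 = 0 ∧
        y1 + y2 + y1 * y2 + y1⁻¹ + y2⁻¹ + (y1 * y2)⁻¹ = c}
      = {(6 : ℂ), (-2 : ℂ), (-3 : ℂ)} := by
  ext c
  simp only [Set.mem_setOf_eq, Set.mem_insert_iff, Set.mem_singleton_iff]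
  constructor
  · rintro ⟨y1, y2, h1, h2, e1, e2, rfl⟩
    rw [deriv1 y1 y2 h1] at e1
    rw [deriv2 y1 y2 h2] at e2
    field_simp at e1 e2
    have E1 : y1 ^ 2 * y2 + y1 ^ 2 * y2 ^ 2 - y2 - 1 = 0 := by
      apply mul_left_cancel₀ (pow_ne_zero 3 h1)
      rw [mul_zero]; linear_combination y1 ^ 3 * e1
    have E2 : y1 * y2 ^ 2 + y1 ^ 2 * y2 ^ 2 - y1 - 1 = 0 := by
      apply mul_left_cancel₀ (pow_ne_zero 3 h2)
      rw [mul_zero]; linear_combination y2 ^ 3 * e2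
    have key : (y1 - y2) * (y1 * y2 + 1) = 0 := by linear_combination E1 - E2
    rcases mul_eq_zero.mp key with hd | hk
    · -- y1 = y2
      have hy : y2 = y1 := by linear_combination -hd
      subst hy
      have fact : (y2 - 1) * ((y2 + 1) * (y2 ^ 2 + y2 + 1)) = 0 := by linear_combination E1
      rcases mul_eq_zero.mp fact with h | h
      · left
        have : y2 = 1 := by linear_combination h
        subst this; norm_num
      · rcases mul_eq_zero.mp h with h | hq
        · right; left
          have : y2 = -1 := by linear_combination h
          subst this; norm_num
        · right; right
          have hinv : y2⁻¹ = y2 ^ 2 := by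
            field_simp
            linear_combination (1 - y2) * hq
          rw [mul_inv, hinv]
          linear_combination (y2 ^ 2 - y2 + 3) * hq
    · -- y1 * y2 = -1
      have hsum : y2 = -y1 := by linear_combination (y1 + y1 * y2 - 1) * hk - E1
      subst hsum
      have hsq : y1 * -y1 + 1 = 0 := hk
      have hval : y1 * -y1 = -1 := by linear_combination hsq
      right; left
      rw [hval]
      field_simp
      ring
  · rintro (rfl | rfl | rfl)
    · refine ⟨1, 1, one_ne_zero, one_ne_zero, ?_, ?_, by norm_num⟩
      · rw [deriv1 1 1 one_ne_zero]; norm_num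
      · rw [deriv2 1 1 one_ne_zero]; norm_num
    · refine ⟨1, -1, one_ne_zero, by norm_num, ?_, ?_, by norm_num⟩
      · rw [deriv1 1 (-1) one_ne_zero]; norm_num
      · rw [deriv2 1 (-1) (by norm_num)]; norm_num
    · have hq := om_rel
      have hne := om_ne
      refine ⟨om, om, hne, hne, ?_, ?_, ?_⟩
      · rw [deriv1 om om hne]
        field_simp
        linear_combination (om ^ 2 - 1) * hq
      · rw [deriv2 om om hne]
        field_simp
        linear_combination (om ^ 2 - 1) * hq
      · have hinv : om⁻¹ = om ^ 2 := by
          field_simp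
          linear_combination (1 - om) * hq
        rw [mul_inv, hinv]
        linear_combination (om ^ 2 - om + 3) * hq

lemma D1eq : D1Bl3 = X 0 * (1 + X 1) - X 2 * (1 + X 3) := by
  simp [D1Bl3, wBl3, pderiv_X]

lemma D2eq : D2Bl3 = X 1 * (1 + X 0) - X 3 * (1 + X 2) := by
  simp [D2Bl3, wBl3, pderiv_X]

set_option maxHeartbeats 2000000 in
lemma keyMem : (wBl3 - 6) * (wBl3 + 2) * (wBl3 + 3) ∈ jacIdealBl3 := by
  have certId : (wBl3 - 6) * (wBl3 + 2) * (wBl3 + 3)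
      = ((8) * 1 + (16) * X 3 + (7) * X 3 * X 3 + (5) * X 2 + (18) * X 2 * X 3 + (4) * X 2 * X 3 * X 3 + (5) * X 2 * X 2 * X 3 + (7) * X 1 + (24) * X 1 * X 3 + (9) * X 1 * X 3 * X 3 + (-6) * X 1 * X 2 + (13) * X 1 * X 2 * X 3 + (4) * X 1 * X 2 * X 3 * X 3 + (-5) * X 1 * X 2 * X 2 + (1) * X 1 * X 1 + (9) * X 1 * X 1 * X 3 + (-6) * X 1 * X 1 * X 2 + (-1) * X 1 * X 1 * X 1 + (4) * X 0 + (4) * X 0 * X 3 + (8) * X 0 * X 1 + (8) * X 0 * X 1 * X 3 + (4) * X 0 * X 1 * X 1 + (4) * X 0 * X 1 * X 1 * X 3) * (X 0 * X 2 - 1)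
      + ((28) * 1 + (13) * X 3 + (24) * X 2 + (15) * X 2 * X 3 + (9) * X 2 * X 2 + (3) * X 2 * X 2 * X 3 + (1) * X 2 * X 2 * X 2 + (12) * X 1 + (6) * X 1 * X 2 + (1) * X 1 * X 2 * X 2 + (15) * X 0 + (1) * X 0 * X 3 + (10) * X 0 * X 1 + (3) * X 0 * X 0 + (3) * X 0 * X 0 * X 1) * (X 1 * X 3 - 1)
      + ((-5) * 1 + (3) * X 3 + (3) * X 3 * X 3 + (-8) * X 2 + (-7) * X 2 * X 3 + (2) * X 2 * X 3 * X 3 + (-2) * X 2 * X 2 + (-12) * X 2 * X 2 * X 3 + (-1) * X 2 * X 2 * X 3 * X 3 + (-5) * X 2 * X 2 * X 2 * X 3 + (2) * X 1 + (7) * X 1 * X 2 + (5) * X 1 * X 2 * X 2 + (3) * X 1 * X 1 + (1) * X 1 * X 1 * X 2 + (2) * X 0 + (3) * X 0 * X 3 + (2) * X 0 * X 1 + (3) * X 0 * X 1 * X 1 + (1) * X 0 * X 0 + (2) * X 0 * X 0 * X 1 + (1) * X 0 * X 0 * X 1 * X 1) * D1Bl3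
      + ((-5) * 1 + (-6) * X 3 + (-1) * X 3 * X 3 + (-5) * X 2 * X 3 + (-5) * X 2 * X 3 * X 3 + (6) * X 2 * X 2 + (5) * X 2 * X 2 * X 3 + (5) * X 2 * X 2 * X 2 + (5) * X 2 * X 2 * X 2 * X 3 + (1) * X 1 * X 2 * X 2) * D2Bl3 := by
    rw [D1eq, D2eq]
    unfold wBl3
    ring
  rw [certId]
  refine Ideal.add_mem _ (Ideal.add_mem _ (Ideal.add_mem _ ?_ ?_) ?_) ?_
  · exact Ideal.mul_mem_left _ _ (Ideal.subset_span (Set.mem_insert _ _))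
  · exact Ideal.mul_mem_left _ _ (Ideal.subset_span
      (Set.mem_insert_of_mem _ (Set.mem_insert _ _)))
  · exact Ideal.mul_mem_left _ _ (Ideal.subset_span
      (Set.mem_insert_of_mem _ (Set.mem_insert_of_mem _ (Set.mem_insert _ _))))
  · exact Ideal.mul_mem_left _ _ (Ideal.subset_span
      (Set.mem_insert_of_mem _ (Set.mem_insert_of_mem _ (Set.mem_insert_of_mem _ rfl))))

lemma part2 : (Ideal.Quotient.mk jacIdealBl3 wBl3 - 6) * (Ideal.Quotient.mk jacIdealBl3 wBl3 + 2) *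
    (Ideal.Quotient.mk jacIdealBl3 wBl3 + 3) = 0 := by
  have h0 : Ideal.Quotient.mk jacIdealBl3 ((wBl3 - 6) * (wBl3 + 2) * (wBl3 + 3)) = 0 :=
    Ideal.Quotient.eq_zero_iff_mem.mpr keyMem
  simpa only [map_mul, map_sub, map_add, map_ofNat] using h0

lemma aeval_self_eq_eval (a : ℚ) (p : Polynomial ℚ) : Polynomial.aeval a p = Polynomial.eval a p := by
  exact congrFun (Polynomial.coe_aeval_eq_eval a) p

section
variable {A : Type*} [CommRing A] [Algebra ℚ A]

lemma ker_cond (v : Fin 4 → A)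
    (h1 : aeval v ((X 0 * X 2 - 1 : MvPolynomial (Fin 4) ℚ)) = 0)
    (h2 : aeval v ((X 1 * X 3 - 1 : MvPolynomial (Fin 4) ℚ)) = 0)
    (h3 : aeval v D1Bl3 = 0) (h4 : aeval v D2Bl3 = 0) :
    ∀ a ∈ jacIdealBl3, aeval v a = 0 := by
  intro a ha
  have hle : jacIdealBl3 ≤ RingHom.ker (aeval v : MvPolynomial (Fin 4) ℚ →ₐ[ℚ] A) := by
    rw [jacIdealBl3, Ideal.span_le]
    intro x hx
    simp only [Set.mem_insert_iff, Set.mem_singleton_iff] at hx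
    simp only [SetLike.mem_coe, RingHom.mem_ker]
    rcases hx with rfl | rfl | rfl | rfl
    · exact h1
    · exact h2
    · exact h3
    · exact h4
  exact (RingHom.mem_ker).mp (hle ha)
end

lemma part3 : RingHom.ker ((Polynomial.aeval (Ideal.Quotient.mk jacIdealBl3 wBl3) :
    Polynomial ℚ →ₐ[ℚ] MvPolynomial (Fin 4) ℚ ⧸ jacIdealBl3).toRingHom) =
      Ideal.span {(Polynomial.X - 6) * (Polynomial.X + 2) * (Polynomial.X + 3)} := by
  have hC6 : Polynomial.C (6 : ℚ) = (6 : Polynomial ℚ) := map_ofNat _ 6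
  have hC2 : Polynomial.C (-2 : ℚ) = (-2 : Polynomial ℚ) := by rw [map_neg, map_ofNat]
  have hC3 : Polynomial.C (-3 : ℚ) = (-3 : Polynomial ℚ) := by rw [map_neg, map_ofNat]
  apply le_antisymm
  · intro p hp
    rw [RingHom.mem_ker] at hp
    have hp' : Polynomial.aeval (Ideal.Quotient.mk jacIdealBl3 wBl3) p = 0 := hp
    -- root 6
    have hk1 := ker_cond (A := ℚ) ![1,1,1,1] (by simp) (by simp)
      (by simp [D1eq]) (by simp [D2eq])
    have r6 : Polynomial.eval (6 : ℚ) p = 0 := by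
      set φ := Ideal.Quotient.liftₐ jacIdealBl3 (aeval ![1,1,1,1]) hk1 with hφ
      have val : φ (Ideal.Quotient.mk jacIdealBl3 wBl3) = 6 := by
        rw [hφ, Ideal.Quotient.liftₐ_apply]; erw [Ideal.Quotient.lift_mk]
        simp [wBl3]
        norm_num
      have := Polynomial.aeval_algHom_apply φ (Ideal.Quotient.mk jacIdealBl3 wBl3) p
      rw [hp', map_zero, val] at this
      rwa [aeval_self_eq_eval] at this
    -- root -2
    have hk2 := ker_cond (A := ℚ) ![1,-1,1,-1] (by simp) (by simp)
      (by simp [D1eq]) (by simp [D2eq])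
    have r2 : Polynomial.eval (-2 : ℚ) p = 0 := by
      set φ := Ideal.Quotient.liftₐ jacIdealBl3 (aeval ![1,-1,1,-1]) hk2 with hφ
      have val : φ (Ideal.Quotient.mk jacIdealBl3 wBl3) = -2 := by
        rw [hφ, Ideal.Quotient.liftₐ_apply]; erw [Ideal.Quotient.lift_mk]
        simp [wBl3]
        norm_num
      have := Polynomial.aeval_algHom_apply φ (Ideal.Quotient.mk jacIdealBl3 wBl3) p
      rw [hp', map_zero, val] at this
      rwa [aeval_self_eq_eval] at this
    -- root -3
    have hq := om_rel
    have hk3 := ker_cond (A := ℂ) ![om, om, om^2, om^2]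
      (by simp; linear_combination (om - 1) * hq)
      (by simp; linear_combination (om - 1) * hq)
      (by simp [D1eq]; linear_combination (om - om^2) * hq)
      (by simp [D2eq]; linear_combination (om - om^2) * hq)
    have r3 : Polynomial.eval (-3 : ℚ) p = 0 := by
      set φ := Ideal.Quotient.liftₐ jacIdealBl3 (aeval ![om, om, om^2, om^2]) hk3 with hφ
      have val : φ (Ideal.Quotient.mk jacIdealBl3 wBl3) = -3 := by
        rw [hφ, Ideal.Quotient.liftₐ_apply]; erw [Ideal.Quotient.lift_mk]
        simp [wBl3]
        linear_combination (om^2 - om + 3) * hq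
      have h0 := Polynomial.aeval_algHom_apply φ (Ideal.Quotient.mk jacIdealBl3 wBl3) p
      rw [hp', map_zero, val] at h0
      have hh := Polynomial.aeval_algebraMap_apply ℂ (-3 : ℚ) p
      rw [show (algebraMap ℚ ℂ) (-3 : ℚ) = (-3 : ℂ) by norm_num, h0] at hh
      have := (map_eq_zero_iff (algebraMap ℚ ℂ) (algebraMap ℚ ℂ).injective).mp hh.symm
      rwa [aeval_self_eq_eval] at this
    -- combine
    have d6 : Polynomial.X - Polynomial.C (6 : ℚ) ∣ p := Polynomial.dvd_iff_isRoot.mpr r6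
    have d2 : Polynomial.X - Polynomial.C (-2 : ℚ) ∣ p := Polynomial.dvd_iff_isRoot.mpr r2
    have d3 : Polynomial.X - Polynomial.C (-3 : ℚ) ∣ p := Polynomial.dvd_iff_isRoot.mpr r3
    have c12 : IsCoprime (Polynomial.X - Polynomial.C (6 : ℚ)) (Polynomial.X - Polynomial.C (-2 : ℚ)) :=
      Polynomial.isCoprime_X_sub_C_of_isUnit_sub (by norm_num)
    have c13 : IsCoprime (Polynomial.X - Polynomial.C (6 : ℚ)) (Polynomial.X - Polynomial.C (-3 : ℚ)) :=
      Polynomial.isCoprime_X_sub_C_of_isUnit_sub (by norm_num)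
    have c23 : IsCoprime (Polynomial.X - Polynomial.C (-2 : ℚ)) (Polynomial.X - Polynomial.C (-3 : ℚ)) :=
      Polynomial.isCoprime_X_sub_C_of_isUnit_sub (by norm_num)
    have dall : (Polynomial.X - Polynomial.C (6 : ℚ)) * (Polynomial.X - Polynomial.C (-2 : ℚ)) *
        (Polynomial.X - Polynomial.C (-3 : ℚ)) ∣ p :=
      (IsCoprime.mul_left c13 c23).mul_dvd (c12.mul_dvd d6 d2) d3
    rw [Ideal.mem_span_singleton]
    have hform : (Polynomial.X - 6) * (Polynomial.X + 2) * (Polynomial.X + 3)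
        = (Polynomial.X - Polynomial.C (6 : ℚ)) * (Polynomial.X - Polynomial.C (-2 : ℚ)) *
          (Polynomial.X - Polynomial.C (-3 : ℚ)) := by
      rw [hC6, hC2, hC3]; ring
    rw [hform]
    exact dall
  · rw [Ideal.span_le, Set.singleton_subset_iff]
    rw [SetLike.mem_coe, RingHom.mem_ker]
    show Polynomial.aeval (Ideal.Quotient.mk jacIdealBl3 wBl3)
      ((Polynomial.X - 6) * (Polynomial.X + 2) * (Polynomial.X + 3)) = 0
    rw [map_mul, map_mul, map_sub, map_add, map_add, Polynomial.aeval_X,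
      map_ofNat, map_ofNat, map_ofNat]
    exact part2

/-- For `W(y₁,y₂) = y₁ + y₂ + y₁y₂ + 1/y₁ + 1/y₂ + 1/(y₁y₂)` (the potential of the
monotone torus in `Bl³ℙ²`), the set of critical values is `{6, -2, -3}`; equivalently,
in the Jacobian ring the element `w` satisfies `(w-6)(w+2)(w+3) = 0` and this cubic
generates the kernel of `ℚ[z] → R`, `z ↦ w` (it is the minimal polynomial relation). -/
theorem critical_values_Bl3P2 :
    {c : ℂ | ∃ y1 y2 : ℂ, y1 ≠ 0 ∧ y2 ≠ 0 ∧
        y1 * deriv (fun t : ℂ => t + y2 + t * y2 + t⁻¹ + y2⁻¹ + (t * y2)⁻¹) y1 = 0 ∧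
        y2 * deriv (fun t : ℂ => y1 + t + y1 * t + y1⁻¹ + t⁻¹ + (y1 * t)⁻¹) y2 = 0 ∧
        y1 + y2 + y1 * y2 + y1⁻¹ + y2⁻¹ + (y1 * y2)⁻¹ = c}
      = {(6 : ℂ), (-2 : ℂ), (-3 : ℂ)} ∧
    (Ideal.Quotient.mk jacIdealBl3 wBl3 - 6) * (Ideal.Quotient.mk jacIdealBl3 wBl3 + 2) *
        (Ideal.Quotient.mk jacIdealBl3 wBl3 + 3) = 0 ∧
    RingHom.ker ((Polynomial.aeval (Ideal.Quotient.mk jacIdealBl3 wBl3) :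
        Polynomial ℚ →ₐ[ℚ] MvPolynomial (Fin 4) ℚ ⧸ jacIdealBl3).toRingHom) =
      Ideal.span {(Polynomial.X - 6) * (Polynomial.X + 2) * (Polynomial.X + 3)} := by
  exact ⟨part1, part2, part3⟩
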